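/- Let R ≥ 0 and α > 0, and set p = √(R² + α²). Define g(z) = √(R² + α² − z²) − R for z ∈ (−α, α). Then g(z) > 0 on (−α, α), the function H(z) = z/g(z) is differentiable on (−α, α) with H′(z) = (R² + α² − R√(R² + α² − z²)) / (√(R² + α² − z²)·(√(R² + α² − z²) − R)²), and H′(z) ≥ 1/(p − R) > 0 for all z ∈ (−α, α); consequently H is strictly increasing and injective on (−α, α). -/

import Mathlib

open Real

lemma lemon_aux_pos (R α z : ℝ) (hR : 0 ≤ R) (hz : z ∈ Set.Ioo (-α) α) :
    R < Real.sqrt (R ^ 2 + α ^ 2 - z ^ 2) := by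
  obtain ⟨h1, h2⟩ := hz
  have hz2 : z ^ 2 < α ^ 2 := by nlinarith
  exact (Real.lt_sqrt hR).2 (by nlinarith)

lemma lemon_aux_deriv (R α z : ℝ) (hR : 0 ≤ R) (hz : z ∈ Set.Ioo (-α) α) :
    HasDerivAt (fun z' : ℝ => z' / (Real.sqrt (R ^ 2 + α ^ 2 - z' ^ 2) - R))
        ((R ^ 2 + α ^ 2 - R * Real.sqrt (R ^ 2 + α ^ 2 - z ^ 2)) /
          (Real.sqrt (R ^ 2 + α ^ 2 - z ^ 2) *
            (Real.sqrt (R ^ 2 + α ^ 2 - z ^ 2) - R) ^ 2)) z := by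
  set s := Real.sqrt (R ^ 2 + α ^ 2 - z ^ 2) with hs
  have hRs : R < s := lemon_aux_pos R α z hR hz
  have hspos : 0 < s := lt_of_le_of_lt hR hRs
  have harg : (0:ℝ) < R ^ 2 + α ^ 2 - z ^ 2 := by
    obtain ⟨h1, h2⟩ := hz; nlinarith
  have hsq : s ^ 2 = R ^ 2 + α ^ 2 - z ^ 2 := Real.sq_sqrt harg.le
  have hinner : HasDerivAt (fun z' : ℝ => R ^ 2 + α ^ 2 - z' ^ 2) (-(2 * z)) z := by
    simpa using (hasDerivAt_pow 2 z).const_sub (R ^ 2 + α ^ 2)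
  have hsqrt : HasDerivAt (fun z' : ℝ => Real.sqrt (R ^ 2 + α ^ 2 - z' ^ 2))
      (1 / (2 * s) * (-(2 * z))) z :=
    (Real.hasDerivAt_sqrt harg.ne').comp z hinner
  have hden : HasDerivAt (fun z' : ℝ => Real.sqrt (R ^ 2 + α ^ 2 - z' ^ 2) - R)
      (1 / (2 * s) * (-(2 * z))) z := hsqrt.sub_const R
  have hdiv := (hasDerivAt_id z).div hden (by linarith : s - R ≠ 0)
  rw [← hs] at hdiv
  refine hdiv.congr_deriv (Eq.symm ?_)
  rw [div_eq_div_iff (mul_pos hspos (pow_pos (sub_pos.2 hRs) 2)).ne'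
    (pow_pos (sub_pos.2 hRs) 2).ne']
  simp only [id]
  field_simp
  linear_combination (-(s-R)^2) * hsq

theorem lemon_axial_ratio_strictMono
    (R α : ℝ) (hR : 0 ≤ R) (hα : 0 < α) :
    (∀ z ∈ Set.Ioo (-α) α, 0 < Real.sqrt (R ^ 2 + α ^ 2 - z ^ 2) - R) ∧
    (∀ z ∈ Set.Ioo (-α) α,
      HasDerivAt (fun z' : ℝ => z' / (Real.sqrt (R ^ 2 + α ^ 2 - z' ^ 2) - R))
        ((R ^ 2 + α ^ 2 - R * Real.sqrt (R ^ 2 + α ^ 2 - z ^ 2)) /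
          (Real.sqrt (R ^ 2 + α ^ 2 - z ^ 2) *
            (Real.sqrt (R ^ 2 + α ^ 2 - z ^ 2) - R) ^ 2)) z ∧
      (1 / (Real.sqrt (R ^ 2 + α ^ 2) - R) ≤
        (R ^ 2 + α ^ 2 - R * Real.sqrt (R ^ 2 + α ^ 2 - z ^ 2)) /
          (Real.sqrt (R ^ 2 + α ^ 2 - z ^ 2) *
            (Real.sqrt (R ^ 2 + α ^ 2 - z ^ 2) - R) ^ 2)) ∧
      0 < 1 / (Real.sqrt (R ^ 2 + α ^ 2) - R)) ∧
    StrictMonoOn (fun z' : ℝ => z' / (Real.sqrt (R ^ 2 + α ^ 2 - z' ^ 2) - R))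
      (Set.Ioo (-α) α) ∧
    Set.InjOn (fun z' : ℝ => z' / (Real.sqrt (R ^ 2 + α ^ 2 - z' ^ 2) - R))
      (Set.Ioo (-α) α) := by
  set p := Real.sqrt (R ^ 2 + α ^ 2) with hp
  have hppos : (0:ℝ) < R ^ 2 + α ^ 2 := by positivity
  have hpsq : p ^ 2 = R ^ 2 + α ^ 2 := Real.sq_sqrt hppos.le
  have hRp : R < p := by
    exact (Real.lt_sqrt hR).2 (by nlinarith)
  have hpR : (0:ℝ) < 1 / (p - R) := by
    apply div_pos one_pos; linarith
  have hbound : ∀ z ∈ Set.Ioo (-α) α,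
      1 / (p - R) ≤
        (R ^ 2 + α ^ 2 - R * Real.sqrt (R ^ 2 + α ^ 2 - z ^ 2)) /
          (Real.sqrt (R ^ 2 + α ^ 2 - z ^ 2) *
            (Real.sqrt (R ^ 2 + α ^ 2 - z ^ 2) - R) ^ 2) := by
    intro z hz
    set s := Real.sqrt (R ^ 2 + α ^ 2 - z ^ 2) with hs
    have hRs : R < s := lemon_aux_pos R α z hR hz
    have hspos : 0 < s := lt_of_le_of_lt hR hRs
    have harg : (0:ℝ) < R ^ 2 + α ^ 2 - z ^ 2 := by
      obtain ⟨h1, h2⟩ := hz; nlinarith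
    have hsq : s ^ 2 = R ^ 2 + α ^ 2 - z ^ 2 := Real.sq_sqrt harg.le
    have hsp : s ≤ p := Real.sqrt_le_sqrt (by nlinarith)
    rw [div_le_div_iff₀ (by linarith) (mul_pos hspos (pow_pos (sub_pos.2 hRs) 2))]
    nlinarith [mul_nonneg (sub_nonneg.2 hsp) (mul_pos hspos (sub_pos.2 hRs)).le,
      mul_nonneg (sub_nonneg.2 hsp) (mul_pos (lt_of_le_of_lt hR hRp) (sub_pos.2 hRs)).le,
      mul_nonneg (sub_nonneg.2 hsp) (mul_pos (lt_of_le_of_lt hR hRp) (sub_pos.2 hRp)).le,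
      mul_nonneg (sub_nonneg.2 hsp) (mul_pos hspos (sub_pos.2 hRp)).le]
  have hmono : StrictMonoOn (fun z' : ℝ => z' / (Real.sqrt (R ^ 2 + α ^ 2 - z' ^ 2) - R))
      (Set.Ioo (-α) α) := by
    apply StrictMonoOn.mono (s := Set.Ioo (-α) α) ?_ le_rfl
    apply strictMonoOn_of_deriv_pos (convex_Ioo _ _)
    · intro z hz
      exact ((lemon_aux_deriv R α z hR hz).continuousAt).continuousWithinAt
    · intro z hz
      rw [interior_Ioo] at hz
      rw [(lemon_aux_deriv R α z hR hz).deriv]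
      exact lt_of_lt_of_le hpR (hbound z hz)
  refine ⟨fun z hz => sub_pos.2 (lemon_aux_pos R α z hR hz),
    fun z hz => ⟨lemon_aux_deriv R α z hR hz, hbound z hz, hpR⟩,
    hmono, hmono.injOn⟩
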